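/- Let X be the d-subsets of a 3d-set and G the group generated by X with relations x² = 1 and xyz = 1 for each partition {x,y,z} of the 3d-set into d-subsets. Then G has order at most 2^{3d-1}. -/

import Mathlib

open Finset

/-- The `d`-subsets of a `3d`-set. -/
def KSub (d : ℕ) := {s : Finset (Fin (3 * d)) // s.card = d}

instance (d : ℕ) : DecidableEq (KSub d) := by unfold KSub; infer_instance
instance (d : ℕ) : Fintype (KSub d) := by unfold KSub; infer_instance

/-- Relators: `x²` for every `d`-subset `x`, and `xyz` for every partition `{x,y,z}`
of the `3d`-set into three `d`-subsets. -/
def knRels (d : ℕ) : Set (FreeGroup (KSub d)) :=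
  {r | (∃ x : KSub d, r = FreeGroup.of x * FreeGroup.of x) ∨
    (∃ x y z : KSub d, Disjoint x.val y.val ∧ Disjoint x.val z.val ∧
      Disjoint y.val z.val ∧ x.val ∪ y.val ∪ z.val = Finset.univ ∧
      r = FreeGroup.of x * FreeGroup.of y * FreeGroup.of z)}

/-- The group `G = ⟨X ∣ x² = 1, xyz = 1 for partitions {x,y,z}⟩`. -/
def knGroup (d : ℕ) : Type := PresentedGroup (knRels d)

noncomputable instance (d : ℕ) : Group (knGroup d) := by unfold knGroup; infer_instance
namespace Kn
variable {d : ℕ}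

def gen (x : KSub d) : knGroup d := PresentedGroup.of (rels := knRels d) x

lemma rel_one {r : FreeGroup (KSub d)} (h : r ∈ knRels d) :
    (PresentedGroup.mk (knRels d) r : knGroup d) = 1 := by
  show (QuotientGroup.mk r : PresentedGroup (knRels d)) = 1
  rw [QuotientGroup.eq_one_iff]
  exact Subgroup.subset_normalClosure h

lemma sq (x : KSub d) : gen x * gen x = 1 := by
  have := rel_one (d := d) (Or.inl ⟨x, rfl⟩)
  exact this

lemma inv_gen (x : KSub d) : (gen x)⁻¹ = gen x := by
  rw [inv_eq_iff_mul_eq_one, sq]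

lemma rel3 {x y z : KSub d} (hxy : Disjoint x.val y.val) (hxz : Disjoint x.val z.val)
    (hyz : Disjoint y.val z.val) (hu : x.val ∪ y.val ∪ z.val = Finset.univ) :
    gen x * gen y * gen z = 1 := by
  have := rel_one (d := d) (Or.inr ⟨x, y, z, hxy, hxz, hyz, hu, rfl⟩)
  exact this

lemma mul_eq {x y z : KSub d} (hxy : Disjoint x.val y.val) (hxz : Disjoint x.val z.val)
    (hyz : Disjoint y.val z.val) (hu : x.val ∪ y.val ∪ z.val = Finset.univ) :
    gen x * gen y = gen z := by
  have h := rel3 hxy hxz hyz hu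
  rw [mul_eq_one_iff_eq_inv] at h
  rw [h, inv_gen]

lemma disj_of_subset_compl {s t : Finset (Fin (3 * d))} (h : t ⊆ sᶜ) : Disjoint s t :=
  Finset.disjoint_left.mpr fun x hxs hxt => (Finset.mem_compl.mp (h hxt)) hxs

lemma L1 {A B c w z : Finset (Fin (3 * d))}
    (hAB : Disjoint A B) (hAc : Disjoint A c) (hAw : Disjoint A w) (hAz : Disjoint A z)
    (hBc : Disjoint B c) (hBw : Disjoint B w) (hBz : Disjoint B z)
    (hcw : Disjoint c w) (hcz : Disjoint c z) (hwz : Disjoint w z)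
    (hcover : A ∪ B ∪ c ∪ w ∪ z = univ)
    (h1 : (A ∪ c).card = d) (h2 : (B ∪ c).card = d) (h3 : (B ∪ w).card = d)
    (h4 : (A ∪ w).card = d) (h5 : z.card = d) :
    gen ⟨A ∪ c, h1⟩ * gen ⟨B ∪ c, h2⟩ = gen ⟨B ∪ w, h3⟩ * gen ⟨A ∪ w, h4⟩ := by
  have e1 : gen ⟨A ∪ c, h1⟩ * gen ⟨z, h5⟩ = gen ⟨B ∪ w, h3⟩ := by
    apply mul_eq
    · exact disjoint_union_left.mpr ⟨hAz, hcz⟩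
    · exact disjoint_union_left.mpr ⟨disjoint_union_right.mpr ⟨hAB, hAw⟩,
        disjoint_union_right.mpr ⟨hBc.symm, hcw⟩⟩
    · exact disjoint_union_right.mpr ⟨hBz.symm, hwz.symm⟩
    · rw [← hcover]; ext i; simp; tauto
  have e2 : gen ⟨z, h5⟩ * gen ⟨B ∪ c, h2⟩ = gen ⟨A ∪ w, h4⟩ := by
    apply mul_eq
    · exact disjoint_union_right.mpr ⟨hBz.symm, hcz.symm⟩
    · exact disjoint_union_right.mpr ⟨hAz.symm, hwz.symm⟩
    · exact disjoint_union_left.mpr ⟨disjoint_union_right.mpr ⟨hAB.symm, hBw⟩,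
        disjoint_union_right.mpr ⟨hAc.symm, hcw⟩⟩
    · rw [← hcover]; ext i; simp; tauto
  calc gen ⟨A ∪ c, h1⟩ * gen ⟨B ∪ c, h2⟩
      = (gen ⟨A ∪ c, h1⟩ * gen ⟨z, h5⟩) * (gen ⟨z, h5⟩ * gen ⟨B ∪ c, h2⟩) := by
        rw [mul_assoc, ← mul_assoc (gen ⟨z, h5⟩), sq ⟨z, h5⟩, one_mul]
    _ = gen ⟨B ∪ w, h3⟩ * gen ⟨A ∪ w, h4⟩ := by rw [e1, e2]


lemma swapP {A B a b : Finset (Fin (3 * d))}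
    (hAB : Disjoint A B)
    (ha : a ⊆ (A ∪ B)ᶜ) (hb : b ⊆ (A ∪ B)ᶜ) (hab : Disjoint a b)
    (h1 : (A ∪ a).card = d) (h2 : (B ∪ a).card = d)
    (h3 : (B ∪ b).card = d) (h4 : (A ∪ b).card = d) :
    gen ⟨A ∪ a, h1⟩ * gen ⟨B ∪ a, h2⟩ = gen ⟨B ∪ b, h3⟩ * gen ⟨A ∪ b, h4⟩ := by
  have hABa : Disjoint (A ∪ B) a := disj_of_subset_compl ha
  have hABb : Disjoint (A ∪ B) b := disj_of_subset_compl hb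
  have hAa : Disjoint A a := (disjoint_union_left.mp hABa).1
  have hBa : Disjoint B a := (disjoint_union_left.mp hABa).2
  have hAb : Disjoint A b := (disjoint_union_left.mp hABb).1
  have hBb : Disjoint B b := (disjoint_union_left.mp hABb).2
  set z := (A ∪ B ∪ a ∪ b)ᶜ with hz
  have hdz : Disjoint (A ∪ B ∪ a ∪ b) z := disjoint_compl_right
  have hAz : Disjoint A z := hdz.mono_left (by intro i hi; simp [Finset.mem_union]; tauto)
  have hBz : Disjoint B z := hdz.mono_left (by intro i hi; simp [Finset.mem_union]; tauto)
  have haz : Disjoint a z := hdz.mono_left (by intro i hi; simp [Finset.mem_union]; tauto)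
  have hbz : Disjoint b z := hdz.mono_left (by intro i hi; simp [Finset.mem_union]; tauto)
  have hre : A ∪ B ∪ a ∪ b = (A ∪ a) ∪ (B ∪ b) := by ext i; simp; tauto
  have hcard2 : (A ∪ B ∪ a ∪ b).card = d + d := by
    rw [hre, card_union_of_disjoint, h1, h3]
    exact disjoint_union_left.mpr ⟨disjoint_union_right.mpr ⟨hAB, hAb⟩,
      disjoint_union_right.mpr ⟨hBa.symm, hab⟩⟩
  have h5 : z.card = d := by
    rw [hz, Finset.card_compl, Fintype.card_fin, hcard2]; omega
  have hcover : A ∪ B ∪ a ∪ b ∪ z = univ := union_compl _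
  exact L1 hAB hAa hAb hAz hBa hBb hBz hab haz hbz hcover h1 h2 h3 h4 h5

lemma Pconst {A B a a' : Finset (Fin (3 * d))}
    (hAB : Disjoint A B)
    (ha : a ⊆ (A ∪ B)ᶜ) (ha' : a' ⊆ (A ∪ B)ᶜ) (haa : a.card = a'.card)
    (h1 : (A ∪ a).card = d) (h2 : (B ∪ a).card = d)
    (h3 : (A ∪ a').card = d) (h4 : (B ∪ a').card = d) :
    gen ⟨A ∪ a, h1⟩ * gen ⟨B ∪ a, h2⟩ = gen ⟨A ∪ a', h3⟩ * gen ⟨B ∪ a', h4⟩ := by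
  -- find b ⊆ (A∪B)ᶜ \ (a ∪ a') with card = a.card
  have hAa : Disjoint A a := (disjoint_union_left.mp (disj_of_subset_compl ha)).1
  have hBa : Disjoint B a := (disjoint_union_left.mp (disj_of_subset_compl ha)).2
  have hA'a : Disjoint A a' := (disjoint_union_left.mp (disj_of_subset_compl ha')).1
  have hB'a : Disjoint B a' := (disjoint_union_left.mp (disj_of_subset_compl ha')).2
  have hcA : A.card + a.card = d := (card_union_of_disjoint hAa).symm.trans h1
  have hcB : B.card + a.card = d := (card_union_of_disjoint hBa).symm.trans h2
  have hcompl : ((A ∪ B)ᶜ).card = 3 * d - (A.card + B.card) := by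
    rw [Finset.card_compl, Fintype.card_fin, card_union_of_disjoint hAB]
  have hex : a.card ≤ ((A ∪ B)ᶜ \ (a ∪ a')).card := by
    have h1' : ((A ∪ B)ᶜ \ (a ∪ a')).card ≥ ((A ∪ B)ᶜ).card - (a ∪ a').card :=
      le_card_sdiff _ _
    have h2' : (a ∪ a').card ≤ a.card + a'.card := card_union_le _ _
    omega
  obtain ⟨b, hbsub, hbcard⟩ := Finset.exists_subset_card_eq hex
  have hb : b ⊆ (A ∪ B)ᶜ := hbsub.trans (sdiff_subset)
  have haab : Disjoint (a ∪ a') b := (sdiff_disjoint.mono_left hbsub).symm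
  have hab : Disjoint a b := (disjoint_union_left.mp haab).1
  have ha'b : Disjoint a' b := (disjoint_union_left.mp haab).2
  have hAb : Disjoint A b := (disjoint_union_left.mp (disj_of_subset_compl hb)).1
  have hBb : Disjoint B b := (disjoint_union_left.mp (disj_of_subset_compl hb)).2
  have h5 : (B ∪ b).card = d := by rw [card_union_of_disjoint hBb, hbcard]; omega
  have h6 : (A ∪ b).card = d := by rw [card_union_of_disjoint hAb, hbcard]; omega
  have e1 := swapP hAB ha hb hab h1 h2 h5 h6
  have e2 := swapP hAB ha' hb ha'b h3 h4 h5 h6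
  rw [e1, e2]


lemma comm (x y : KSub d) : gen x * gen y = gen y * gen x := by
  have hx : x.1 \ y.1 ∪ x.1 ∩ y.1 = x.1 := sdiff_union_inter _ _
  have hy : y.1 \ x.1 ∪ x.1 ∩ y.1 = y.1 := by rw [inter_comm]; exact sdiff_union_inter _ _
  set A := x.1 \ y.1 with hA
  set B := y.1 \ x.1 with hB
  set c := x.1 ∩ y.1 with hcdef
  have hAB : Disjoint A B := disjoint_sdiff_sdiff
  have hc : c ⊆ (A ∪ B)ᶜ := by
    intro i hi
    simp only [hcdef, mem_inter] at hi
    simp [hA, hB, hi.1, hi.2]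
  have h1 : (A ∪ c).card = d := by rw [hx]; exact x.2
  have h2 : (B ∪ c).card = d := by rw [hy]; exact y.2
  have hAc : Disjoint A c := (disjoint_union_left.mp (disj_of_subset_compl hc)).1
  have hBc : Disjoint B c := (disjoint_union_left.mp (disj_of_subset_compl hc)).2
  have hcA : A.card + c.card = d := (card_union_of_disjoint hAc).symm.trans h1
  have hcB : B.card + c.card = d := (card_union_of_disjoint hBc).symm.trans h2
  have hcompl : ((A ∪ B)ᶜ).card = 3 * d - (A.card + B.card) := by
    rw [Finset.card_compl, Fintype.card_fin, card_union_of_disjoint hAB]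
  have hex : c.card ≤ ((A ∪ B)ᶜ \ c).card := by
    have h1' : ((A ∪ B)ᶜ \ c).card ≥ ((A ∪ B)ᶜ).card - c.card := le_card_sdiff _ _
    omega
  obtain ⟨b, hbsub, hbcard⟩ := Finset.exists_subset_card_eq hex
  have hb : b ⊆ (A ∪ B)ᶜ := hbsub.trans sdiff_subset
  have hcb : Disjoint c b := (sdiff_disjoint.mono_left hbsub).symm
  have hAb : Disjoint A b := (disjoint_union_left.mp (disj_of_subset_compl hb)).1
  have hBb : Disjoint B b := (disjoint_union_left.mp (disj_of_subset_compl hb)).2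
  have h5 : (B ∪ b).card = d := by rw [card_union_of_disjoint hBb, hbcard]; omega
  have h6 : (A ∪ b).card = d := by rw [card_union_of_disjoint hAb, hbcard]; omega
  have e1 := swapP hAB hc hb hcb h1 h2 h5 h6
  have hb' : b ⊆ (B ∪ A)ᶜ := by rwa [union_comm]
  have hc' : c ⊆ (B ∪ A)ᶜ := by rwa [union_comm]
  have e2 := Pconst hAB.symm hb' hc' hbcard h5 h6 h2 h1
  have hxe : x = ⟨A ∪ c, h1⟩ := Subtype.ext hx.symm
  have hye : y = ⟨B ∪ c, h2⟩ := Subtype.ext hy.symm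
  rw [hxe, hye, e1, e2]


lemma mul_comm_all (a b : knGroup d) : a * b = b * a := by
  have step1 : ∀ (x : KSub d) (b : knGroup d), gen x * b = b * gen x := by
    intro x b
    have hb : b ∈ Subgroup.centralizer {gen x} :=
      PresentedGroup.generated_by (knRels d) (Subgroup.centralizer {gen x})
        (fun y => Subgroup.mem_centralizer_singleton_iff.mpr (comm x y).symm) b
    exact (Subgroup.mem_centralizer_singleton_iff.mp hb).symm
  have ha : a ∈ Subgroup.centralizer {b} :=
    PresentedGroup.generated_by (knRels d) (Subgroup.centralizer {b})
      (fun y => Subgroup.mem_centralizer_singleton_iff.mpr (step1 y b)) a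
  exact Subgroup.mem_centralizer_singleton_iff.mp ha

lemma pair_eq {x x' u u' : KSub d} (h1 : x.1 \ x'.1 = u.1 \ u'.1)
    (h2 : x'.1 \ x.1 = u'.1 \ u.1) :
    gen x * gen x' = gen u * gen u' := by
  have hAB : Disjoint (x.1 \ x'.1) (x'.1 \ x.1) := disjoint_sdiff_sdiff
  have hxA : x.1 \ x'.1 ∪ x.1 ∩ x'.1 = x.1 := sdiff_union_inter _ _
  have hx'B : x'.1 \ x.1 ∪ x.1 ∩ x'.1 = x'.1 := by
    rw [inter_comm]; exact sdiff_union_inter _ _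
  have huA : x.1 \ x'.1 ∪ u.1 ∩ u'.1 = u.1 := by rw [h1]; exact sdiff_union_inter _ _
  have hu'B : x'.1 \ x.1 ∪ u.1 ∩ u'.1 = u'.1 := by
    rw [h2, inter_comm]; exact sdiff_union_inter _ _
  have ha : x.1 ∩ x'.1 ⊆ (x.1 \ x'.1 ∪ x'.1 \ x.1)ᶜ := by
    intro i hi
    simp only [mem_inter] at hi
    simp only [mem_compl, mem_union, mem_sdiff]
    push_neg
    exact ⟨fun _ => hi.2, fun _ => hi.1⟩
  have ha' : u.1 ∩ u'.1 ⊆ (x.1 \ x'.1 ∪ x'.1 \ x.1)ᶜ := by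
    intro i hi
    simp only [mem_inter] at hi
    simp only [mem_compl, mem_union, h1, h2, mem_sdiff]
    push_neg
    exact ⟨fun _ => hi.2, fun _ => hi.1⟩
  have c1 : (x.1 \ x'.1 ∪ x.1 ∩ x'.1).card = d := by rw [hxA]; exact x.2
  have c2 : (x'.1 \ x.1 ∪ x.1 ∩ x'.1).card = d := by rw [hx'B]; exact x'.2
  have c3 : (x.1 \ x'.1 ∪ u.1 ∩ u'.1).card = d := by rw [huA]; exact u.2
  have c4 : (x'.1 \ x.1 ∪ u.1 ∩ u'.1).card = d := by rw [hu'B]; exact u'.2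
  have hAa : Disjoint (x.1 \ x'.1) (x.1 ∩ x'.1) :=
    (disjoint_union_left.mp (disj_of_subset_compl ha)).1
  have hAa' : Disjoint (x.1 \ x'.1) (u.1 ∩ u'.1) :=
    (disjoint_union_left.mp (disj_of_subset_compl ha')).1
  have hcc : (x.1 ∩ x'.1).card = (u.1 ∩ u'.1).card := by
    have e1 := (card_union_of_disjoint hAa).symm.trans c1
    have e2 := (card_union_of_disjoint hAa').symm.trans c3
    omega
  have hP := Pconst hAB ha ha' hcc c1 c2 c3 c4
  rw [congrArg gen (Subtype.ext hxA.symm : x = ⟨_, c1⟩),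
    congrArg gen (Subtype.ext hx'B.symm : x' = ⟨_, c2⟩),
    congrArg gen (Subtype.ext huA.symm : u = ⟨_, c3⟩),
    congrArg gen (Subtype.ext hu'B.symm : u' = ⟨_, c4⟩)]
  exact hP

lemma insert_sdiff_insert' {c : Finset (Fin (3 * d))} {i j : Fin (3 * d)}
    (hi : i ∉ c) (hj : j ∉ c) :
    insert i c \ insert j c = ({i} : Finset (Fin (3 * d))) \ {j} := by
  ext a
  simp only [mem_sdiff, mem_insert, mem_singleton]
  constructor
  · rintro ⟨h1, h2⟩
    push_neg at h2
    rcases h1 with rfl | h1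
    · exact ⟨rfl, h2.1⟩
    · exact absurd h1 h2.2
  · rintro ⟨rfl, h2⟩
    exact ⟨Or.inl rfl, by push_neg; exact ⟨h2, hi⟩⟩

end Kn


/-- The group `G` generated by the `d`-subsets of a `3d`-set, with relations `x² = 1` and
`xyz = 1` for each partition `{x,y,z}` into `d`-subsets, has order at most `2^(3d-1)`. -/
theorem knGroup_card_le (d : ℕ) : Nat.card (knGroup d) ≤ 2 ^ (3 * d - 1) := by
  rcases Nat.eq_zero_or_pos d with hd0 | hd
  · subst hd0
    have h1 : ∀ x : KSub 0, Kn.gen x = 1 := by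
      intro x
      have hx : x.1 = (∅ : Finset (Fin (3 * 0))) := Finset.card_eq_zero.mp x.2
      have hu : x.1 ∪ x.1 ∪ x.1 = Finset.univ := by
        rw [hx]; simp
      have h3 := Kn.rel3 (x := x) (y := x) (z := x) (by simp [hx]) (by simp [hx])
        (by simp [hx]) hu
      have h2 := Kn.sq x
      calc Kn.gen x = Kn.gen x * (Kn.gen x * Kn.gen x) := by rw [h2, mul_one]
        _ = 1 := by rw [← mul_assoc, h3]
    have hall : ∀ g : knGroup 0, g = 1 := by
      intro g
      have hg := PresentedGroup.generated_by (knRels 0) ⊥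
        (fun j => by
          have : (PresentedGroup.of j : knGroup 0) = Kn.gen j := rfl
          rw [this, h1 j]; exact Subgroup.one_mem _) g
      exact Subgroup.mem_bot.mp hg
    have hsurj : Function.Surjective (fun _ : Unit => (1 : knGroup 0)) :=
      fun g => ⟨(), (hall g).symm⟩
    calc Nat.card (knGroup 0) ≤ Nat.card Unit := Nat.card_le_card_of_surjective _ hsurj
      _ ≤ 2 ^ (3 * 0 - 1) := by simp
  · -- main case: d ≥ 1
    have hd3 : 3 ≤ 3 * d := by omega
    set i0 : Fin (3 * d) := ⟨0, by omega⟩ with hi0def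
    have hcex : ∀ j : Fin (3 * d), d - 1 ≤ (({i0, j} : Finset (Fin (3 * d)))ᶜ).card := by
      intro j
      rw [Finset.card_compl, Fintype.card_fin]
      have h2 : ({i0, j} : Finset (Fin (3 * d))).card ≤ 2 :=
        (Finset.card_insert_le _ _).trans (by simp)
      omega
    choose cf hcsub hccard using fun j => Finset.exists_subset_card_eq (hcex j)
    have hi0c : ∀ j, i0 ∉ cf j := fun j hj =>
      (Finset.mem_compl.mp (hcsub j hj)) (Finset.mem_insert_self _ _)
    have hjc : ∀ j, j ∉ cf j := fun j hj =>
      (Finset.mem_compl.mp (hcsub j hj))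
        (Finset.mem_insert_of_mem (Finset.mem_singleton_self j))
    have hXc : ∀ j, (insert i0 (cf j)).card = d := fun j => by
      rw [Finset.card_insert_of_notMem (hi0c j), hccard]; omega
    have hYc : ∀ j, (insert j (cf j)).card = d := fun j => by
      rw [Finset.card_insert_of_notMem (hjc j), hccard]; omega
    set X : Fin (3 * d) → KSub d := fun j => ⟨insert i0 (cf j), hXc j⟩ with hXdef
    set Y : Fin (3 * d) → KSub d := fun j => ⟨insert j (cf j), hYc j⟩ with hYdef
    set E : Fin (3 * d) → knGroup d := fun j => Kn.gen (X j) * Kn.gen (Y j) with hEdef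
    set H : Subgroup (knGroup d) :=
      Subgroup.closure (Set.range (fun j : {j : Fin (3 * d) // j ≠ i0} => E j.1)) with hHdef
    have hXY : ∀ i j : Fin (3 * d), Kn.gen (X j) = Kn.gen (X j) := fun _ _ => rfl
    -- E i0 = 1
    have hE0 : E i0 = 1 := by
      have : X i0 = Y i0 := Subtype.ext rfl
      rw [hEdef]
      simp only []
      rw [this]
      exact Kn.sq _
    have hEmem : ∀ i, E i ∈ H := by
      intro i
      by_cases h : i = i0
      · rw [h, hE0]; exact Subgroup.one_mem _
      · exact Subgroup.subset_closure ⟨⟨i, h⟩, rfl⟩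
    -- the key swap lemma
    have pairE : ∀ (x x' : KSub d) (i j : Fin (3 * d)), i ≠ j →
        x.1 \ x'.1 = ({i} : Finset (Fin (3 * d))) \ {j} →
        x'.1 \ x.1 = ({j} : Finset (Fin (3 * d))) \ {i} →
        Kn.gen x * Kn.gen x' = (E i)⁻¹ * E j := by
      intro x x' i j hij hs1 hs2
      have hcex3 : d - 1 ≤ ((insert i0 {i, j} : Finset (Fin (3 * d)))ᶜ).card := by
        rw [Finset.card_compl, Fintype.card_fin]
        have h3 : (insert i0 {i, j} : Finset (Fin (3 * d))).card ≤ 3 :=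
          (Finset.card_insert_le _ _).trans (by
            have := Finset.card_insert_le i ({j} : Finset (Fin (3 * d)))
            simp only [Finset.card_singleton] at this
            omega)
        omega
      obtain ⟨c, hcs, hcc⟩ := Finset.exists_subset_card_eq hcex3
      have hmem : ∀ a ∈ (insert i0 {i, j} : Finset (Fin (3 * d))), a ∉ c := by
        intro a ha hac
        exact (Finset.mem_compl.mp (hcs hac)) ha
      have hni0 : i0 ∉ c := hmem i0 (Finset.mem_insert_self _ _)
      have hni : i ∉ c := hmem i (by simp)
      have hnj : j ∉ c := hmem j (by simp)
      have cs0 : (insert i0 c).card = d := by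
        rw [Finset.card_insert_of_notMem hni0, hcc]; omega
      have csi : (insert i c).card = d := by
        rw [Finset.card_insert_of_notMem hni, hcc]; omega
      have csj : (insert j c).card = d := by
        rw [Finset.card_insert_of_notMem hnj, hcc]; omega
      have stepA : Kn.gen x * Kn.gen x' = Kn.gen ⟨insert i c, csi⟩ * Kn.gen ⟨insert j c, csj⟩ := by
        apply Kn.pair_eq
        · rw [Kn.insert_sdiff_insert' hni hnj]; exact hs1
        · rw [Kn.insert_sdiff_insert' hnj hni]; exact hs2
      have hEj : Kn.gen ⟨insert i0 c, cs0⟩ * Kn.gen ⟨insert j c, csj⟩ = E j := by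
        apply Kn.pair_eq
        · rw [Kn.insert_sdiff_insert' hni0 hnj,
            Kn.insert_sdiff_insert' (hi0c j) (hjc j)]
        · rw [Kn.insert_sdiff_insert' hnj hni0,
            Kn.insert_sdiff_insert' (hjc j) (hi0c j)]
      have hEi : Kn.gen ⟨insert i0 c, cs0⟩ * Kn.gen ⟨insert i c, csi⟩ = E i := by
        apply Kn.pair_eq
        · rw [Kn.insert_sdiff_insert' hni0 hni,
            Kn.insert_sdiff_insert' (hi0c i) (hjc i)]
        · rw [Kn.insert_sdiff_insert' hni hni0,
            Kn.insert_sdiff_insert' (hjc i) (hi0c i)]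
      have hEiinv : Kn.gen ⟨insert i c, csi⟩ * Kn.gen ⟨insert i0 c, cs0⟩ = (E i)⁻¹ := by
        rw [← hEi, mul_inv_rev, Kn.inv_gen ⟨insert i c, csi⟩, Kn.inv_gen ⟨insert i0 c, cs0⟩]
      calc Kn.gen x * Kn.gen x'
          = Kn.gen ⟨insert i c, csi⟩ * Kn.gen ⟨insert j c, csj⟩ := stepA
        _ = Kn.gen ⟨insert i c, csi⟩ *
            (Kn.gen ⟨insert i0 c, cs0⟩ * Kn.gen ⟨insert i0 c, cs0⟩) *
            Kn.gen ⟨insert j c, csj⟩ := by rw [Kn.sq ⟨insert i0 c, cs0⟩, mul_one]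
        _ = (Kn.gen ⟨insert i c, csi⟩ * Kn.gen ⟨insert i0 c, cs0⟩) *
            (Kn.gen ⟨insert i0 c, cs0⟩ * Kn.gen ⟨insert j c, csj⟩) := by
              rw [mul_assoc, mul_assoc, mul_assoc]
        _ = (E i)⁻¹ * E j := by rw [hEiinv, hEj]
    -- every product of two generators lies in H
    have mem_pair : ∀ (m : ℕ) (x x' : KSub d), (x.1 \ x'.1).card = m →
        Kn.gen x * Kn.gen x' ∈ H := by
      intro m
      induction m with
      | zero =>
        intro x x' h
        have hsub : x.1 ⊆ x'.1 :=
          Finset.sdiff_eq_empty_iff_subset.mp (Finset.card_eq_zero.mp h)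
        have hxx : x = x' :=
          Subtype.ext (Finset.eq_of_subset_of_card_le hsub (by rw [x.2, x'.2]))
        rw [hxx, Kn.sq]
        exact Subgroup.one_mem _
      | succ m ih =>
        intro x x' h
        obtain ⟨i, hi⟩ := Finset.card_pos.mp (by omega : 0 < (x.1 \ x'.1).card)
        have hcomm : (x'.1 \ x.1).card = m + 1 := by
          rw [Finset.card_sdiff_comm (x'.2.trans x.2.symm)]; exact h
        obtain ⟨j, hj⟩ := Finset.card_pos.mp (by omega : 0 < (x'.1 \ x.1).card)
        rw [Finset.mem_sdiff] at hi hj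
        have hij : i ≠ j := fun hh => hi.2 (hh ▸ hj.1)
        have hjx : j ∉ x.1.erase i := fun hh => hj.2 (Finset.mem_of_mem_erase hh)
        have hcm : (insert j (x.1.erase i)).card = d := by
          rw [Finset.card_insert_of_notMem hjx, Finset.card_erase_of_mem hi.1, x.2]
          omega
        set xm : KSub d := ⟨insert j (x.1.erase i), hcm⟩ with hxmdef
        have s1 : x.1 \ xm.1 = ({i} : Finset (Fin (3 * d))) \ {j} := by
          ext a
          simp only [hxmdef, Finset.mem_sdiff, Finset.mem_insert, Finset.mem_erase,
            Finset.mem_singleton]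
          constructor
          · rintro ⟨ha, hb⟩
            push_neg at hb
            obtain ⟨hb1, hb2⟩ := hb
            have hai : a = i := by
              by_contra hne
              exact hb2 hne ha
            exact ⟨hai, hb1⟩
          · rintro ⟨rfl, hb⟩
            refine ⟨hi.1, ?_⟩
            push_neg
            exact ⟨hb, fun hc _ => absurd rfl hc⟩
        have s2 : xm.1 \ x.1 = ({j} : Finset (Fin (3 * d))) \ {i} := by
          ext a
          simp only [hxmdef, Finset.mem_sdiff, Finset.mem_insert, Finset.mem_erase,
            Finset.mem_singleton]
          constructor
          · rintro ⟨ha, hb⟩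
            rcases ha with rfl | ⟨ha1, ha2⟩
            · exact ⟨rfl, hij.symm⟩
            · exact absurd ha2 hb
          · rintro ⟨rfl, hb⟩
            exact ⟨Or.inl rfl, hj.2⟩
        have s3 : xm.1 \ x'.1 = (x.1 \ x'.1).erase i := by
          ext a
          simp only [hxmdef, Finset.mem_sdiff, Finset.mem_insert, Finset.mem_erase]
          constructor
          · rintro ⟨ha, hb⟩
            rcases ha with rfl | ⟨ha1, ha2⟩
            · exact absurd hj.1 hb
            · exact ⟨ha1, ha2, hb⟩
          · rintro ⟨ha1, ha2, hb⟩
            exact ⟨Or.inr ⟨ha1, ha2⟩, hb⟩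
        have hfirst : Kn.gen x * Kn.gen xm ∈ H := by
          rw [pairE x xm i j hij s1 s2]
          exact Subgroup.mul_mem _ (Subgroup.inv_mem _ (hEmem i)) (hEmem j)
        have hsecond : Kn.gen xm * Kn.gen x' ∈ H := by
          apply ih
          rw [s3, Finset.card_erase_of_mem (Finset.mem_sdiff.mpr hi), h]
          omega
        have : Kn.gen x * Kn.gen x' =
            (Kn.gen x * Kn.gen xm) * (Kn.gen xm * Kn.gen x') := by
          rw [mul_assoc, ← mul_assoc (Kn.gen xm), Kn.sq, one_mul]
        rw [this]
        exact Subgroup.mul_mem _ hfirst hsecond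
    -- every generator lies in H
    have gen_mem : ∀ x : KSub d, Kn.gen x ∈ H := by
      intro x
      have h2d : d ≤ (x.1ᶜ).card := by
        rw [Finset.card_compl, Fintype.card_fin, x.2]; omega
      obtain ⟨y, hysub, hyc⟩ := Finset.exists_subset_card_eq h2d
      have hdxy : Disjoint x.1 y := Kn.disj_of_subset_compl hysub
      have hzc : ((x.1 ∪ y)ᶜ).card = d := by
        rw [Finset.card_compl, Fintype.card_fin, Finset.card_union_of_disjoint hdxy,
          x.2, hyc]
        omega
      have hdxz : Disjoint x.1 (x.1 ∪ y)ᶜ :=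
        disjoint_compl_right.mono_left Finset.subset_union_left
      have hdyz : Disjoint y (x.1 ∪ y)ᶜ :=
        disjoint_compl_right.mono_left Finset.subset_union_right
      have hcov : x.1 ∪ y ∪ (x.1 ∪ y)ᶜ = Finset.univ := Finset.union_compl _
      have hrel := Kn.rel3 (x := x) (y := ⟨y, hyc⟩) (z := ⟨(x.1 ∪ y)ᶜ, hzc⟩)
        hdxy hdxz hdyz hcov
      rw [mul_assoc, mul_eq_one_iff_eq_inv] at hrel
      rw [hrel, mul_inv_rev, Kn.inv_gen ⟨(x.1 ∪ y)ᶜ, hzc⟩, Kn.inv_gen ⟨y, hyc⟩]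
      exact mem_pair _ _ _ rfl
    have hTop : ∀ g : knGroup d, g ∈ H :=
      PresentedGroup.generated_by (knRels d) H gen_mem
    -- commutative group structure
    letI : CommGroup (knGroup d) :=
      { (inferInstance : Group (knGroup d)) with mul_comm := Kn.mul_comm_all }
    have hEsq : ∀ i, E i * E i = 1 := by
      intro i
      have : E i * E i = (Kn.gen (X i) * Kn.gen (X i)) * (Kn.gen (Y i) * Kn.gen (Y i)) := by
        rw [hEdef]
        simp only []
        rw [mul_assoc, mul_assoc, ← mul_assoc (Kn.gen (Y i)),
          Kn.mul_comm_all (Kn.gen (Y i)) (Kn.gen (X i))]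
        rw [mul_assoc]
      rw [this, Kn.sq, Kn.sq, one_mul]
    have hEinv : ∀ i, (E i)⁻¹ = E i := fun i => inv_eq_of_mul_eq_one_right (hEsq i)
    set f : Finset {j : Fin (3 * d) // j ≠ i0} → knGroup d :=
      fun S => ∏ j ∈ S, E j.1 with hfdef
    have hmul : ∀ S S', f S * f S' = f (symmDiff S S') := by
      intro S S'
      have hpu : (symmDiff S S') ∪ (S ∩ S') = S ∪ S' := by
        ext a
        simp only [Finset.mem_union, Finset.mem_inter, Finset.mem_symmDiff]
        tauto
      have hdisj : Disjoint (symmDiff S S') (S ∩ S') := by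
        rw [Finset.disjoint_left]
        intro a ha hb
        simp only [Finset.mem_symmDiff] at ha
        simp only [Finset.mem_inter] at hb
        tauto
      calc f S * f S' = (∏ j ∈ S ∪ S', E j.1) * ∏ j ∈ S ∩ S', E j.1 :=
            (Finset.prod_union_inter).symm
        _ = (∏ j ∈ (symmDiff S S') ∪ (S ∩ S'), E j.1) * ∏ j ∈ S ∩ S', E j.1 := by rw [hpu]
        _ = ((∏ j ∈ symmDiff S S', E j.1) * ∏ j ∈ S ∩ S', E j.1) * ∏ j ∈ S ∩ S', E j.1 := by
            rw [Finset.prod_union hdisj]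
        _ = (∏ j ∈ symmDiff S S', E j.1) * ((∏ j ∈ S ∩ S', E j.1) * ∏ j ∈ S ∩ S', E j.1) := by
            rw [mul_assoc]
        _ = f (symmDiff S S') := by
            have hone : (∏ j ∈ S ∩ S', E j.1) * (∏ j ∈ S ∩ S', E j.1) = 1 := by
              rw [← Finset.prod_mul_distrib]
              exact Finset.prod_eq_one fun j _ => hEsq j.1
            rw [hone, mul_one]
    have hinv : ∀ S, (f S)⁻¹ = f S := by
      intro S
      rw [hfdef]
      simp only []
      rw [← Finset.prod_inv_distrib]
      exact Finset.prod_congr rfl fun j _ => hEinv j.1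
    have hsurj : Function.Surjective f := by
      intro g
      have hg : g ∈ H := hTop g
      rw [hHdef] at hg
      refine Subgroup.closure_induction ?_ ?_ ?_ ?_ hg
      · rintro x ⟨j, rfl⟩
        exact ⟨{j}, Finset.prod_singleton _ _⟩
      · exact ⟨∅, Finset.prod_empty⟩
      · rintro x y hx hy ⟨S, rfl⟩ ⟨S', rfl⟩
        exact ⟨symmDiff S S', (hmul S S').symm⟩
      · rintro x hx ⟨S, rfl⟩
        exact ⟨S, (hinv S).symm⟩
    have hcount := Nat.card_le_card_of_surjective f hsurj
    have hΩ : Fintype.card {j : Fin (3 * d) // j ≠ i0} = 3 * d - 1 := by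
      rw [Fintype.card_subtype_compl, Fintype.card_fin, Fintype.card_subtype_eq]
    calc Nat.card (knGroup d) ≤ Nat.card (Finset {j : Fin (3 * d) // j ≠ i0}) := hcount
      _ = 2 ^ (3 * d - 1) := by
          rw [Nat.card_eq_fintype_card, Fintype.card_finset, hΩ]
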